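/- Let p be a pmf on ℕ with finite mean, and define F : [0,∞) → ℝ by F(c) = sup{ H(w ⋆ p) : w a pmf on ℕ with mean ∑ₙ n·w(n) ≤ c }, where (w ⋆ p)(n) = ∑_{j=0}^{n} w(j)·p(n−j). Then F(c) → H(p) as c → 0⁺; equivalently, sup{ H(w ⋆ p) − H(p) : w a pmf on ℕ with mean ≤ c } tends to 0 as c → 0⁺. -/

import Mathlib

open scoped BigOperators

/-- Shannon entropy (natural log) of a pmf on ℕ. -/
noncomputable def Hent (p : ℕ → ℝ) : ℝ := ∑' n, -(p n * Real.log (p n))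

/-- `p` is a probability mass function on ℕ. -/
def IsPmf (p : ℕ → ℝ) : Prop := (∀ n, 0 ≤ p n) ∧ (∑' n, p n) = 1

/-- pmf of `W + S` for independent `W ~ w`, `S ~ p`. -/
noncomputable def convPmf (w p : ℕ → ℝ) : ℕ → ℝ :=
  fun n => ∑ j ∈ Finset.range (n + 1), w j * p (n - j)

/-- pmf of `(S - τ)₊` for `S ~ p` (truncated subtraction on ℕ). -/
noncomputable def truncSubPmf (p : ℕ → ℝ) (τ : ℕ) : ℕ → ℝ :=
  fun n => ∑' i, if i - τ = n then p i else 0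

/-- pmf of `(X - T)₊` for independent `X ~ x`, `T ~ q`. -/
noncomputable def subPairPmf (x q : ℕ → ℝ) : ℕ → ℝ :=
  fun n => ∑' i, ∑' j, if i - j = n then x i * q j else 0

/-- `w` has (well-defined) mean at most `c`. -/
def MeanLe (w : ℕ → ℝ) (c : ℝ) : Prop :=
  Summable (fun n : ℕ => (n : ℝ) * w n) ∧ (∑' n : ℕ, (n : ℝ) * w n) ≤ c

/-- Output entropies `H((X - (S₁ - τ)₊)₊ + S₂)` over admissible laws of `X`
(independent of `(S₁, S₂)`, with `E[(X - (S₁ - τ)₊)₊] ≤ c`);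
this is the generalized-feedback maximum output entropy problem. -/
def genFB (p : ℕ → ℝ) (τ : ℕ) (c : ℝ) : Set ℝ :=
  {h | ∃ x : ℕ → ℝ, IsPmf x ∧
    MeanLe (subPairPmf x (truncSubPmf p τ)) c ∧
    h = Hent (convPmf (subPairPmf x (truncSubPmf p τ)) p)}

/-- Output entropies `H(W + S)` over admissible laws of `W` (independent of `S`,
nonnegative, with `E[W] ≤ c`); this is the full-feedback maximum output entropy problem. -/
def fullFB (p : ℕ → ℝ) (c : ℝ) : Set ℝ :=
  {h | ∃ w : ℕ → ℝ, IsPmf w ∧ MeanLe w c ∧ h = Hent (convPmf w p)}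

section Aux

open Filter Topology

lemma isPmf_summable {p : ℕ → ℝ} (hp : IsPmf p) : Summable p := by
  by_contra h
  have h0 := tsum_eq_zero_of_not_summable h
  rw [hp.2] at h0
  norm_num at h0

lemma isPmf_le_one {p : ℕ → ℝ} (hp : IsPmf p) (n : ℕ) : p n ≤ 1 := by
  have := Summable.le_tsum (isPmf_summable hp) n (fun j _ => hp.1 j)
  rwa [hp.2] at this

lemma ent_term_nonneg {x : ℝ} (h0 : 0 ≤ x) (h1 : x ≤ 1) : 0 ≤ -(x * Real.log x) := by
  have := Real.mul_log_nonpos h0 h1; linarith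

lemma norm_eq_self_of_nonneg {f : ℕ → ℝ} (h : ∀ n, 0 ≤ f n) :
    (fun n => ‖f n‖) = f := funext fun n => Real.norm_of_nonneg (h n)

lemma key_ineq {x y : ℝ} (hx : 0 ≤ x) (hy : 0 < y) :
    -(x * Real.log x) ≤ -(x * Real.log y) - x + y := by
  rcases eq_or_lt_of_le hx with h | h
  · rw [← h]; simp; linarith
  · have hl : Real.log (y / x) ≤ y / x - 1 := Real.log_le_sub_one_of_pos (div_pos hy h)
    rw [Real.log_div (ne_of_gt hy) (ne_of_gt h)] at hl
    have h2 := mul_le_mul_of_nonneg_left hl h.le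
    have h3 : x * (y / x - 1) = y - x := by field_simp
    rw [h3, mul_sub] at h2
    linarith

lemma mul_log_split {a b : ℝ} (ha : 0 ≤ a) (hb : 0 ≤ b) :
    -(a * b * Real.log (a * b)) = (-(a * Real.log a)) * b + a * (-(b * Real.log b)) := by
  rcases eq_or_lt_of_le ha with h | h
  · rw [← h]; simp
  rcases eq_or_lt_of_le hb with h' | h'
  · rw [← h']; simp
  rw [Real.log_mul (ne_of_gt h) (ne_of_gt h')]; ring

lemma entBound {w : ℕ → ℝ} (hw : IsPmf w) {θ : ℝ} (h0 : 0 < θ) (h1 : θ < 1)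
    (hm : Summable (fun n : ℕ => (n : ℝ) * w n)) :
    Summable (fun n : ℕ => -(w n * Real.log (w n))) ∧
      ∑' n : ℕ, -(w n * Real.log (w n)) ≤
        -Real.log (1 - θ) + (∑' n : ℕ, (n : ℝ) * w n) * (-Real.log θ) := by
  have hθ1 : (0:ℝ) < 1 - θ := by linarith
  set G : ℕ → ℝ := fun n => w n * (-Real.log (1 - θ)) + ((n : ℝ) * w n) * (-Real.log θ)
      + ((1 - θ) * θ ^ n - w n) with hG
  have hle : ∀ n, -(w n * Real.log (w n)) ≤ G n := by
    intro n
    have hy : (0:ℝ) < (1 - θ) * θ ^ n := mul_pos hθ1 (pow_pos h0 n)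
    have hk := key_ineq (hw.1 n) hy
    have hlog : Real.log ((1 - θ) * θ ^ n) = Real.log (1 - θ) + (n : ℝ) * Real.log θ := by
      rw [Real.log_mul (ne_of_gt hθ1) (pow_ne_zero n (ne_of_gt h0)), Real.log_pow]
    rw [hlog] at hk
    calc -(w n * Real.log (w n)) ≤ _ := hk
      _ = G n := by simp only [hG]; ring
  have hwS := isPmf_summable hw
  have hgeo : Summable (fun n : ℕ => θ ^ n) := summable_geometric_of_lt_one h0.le h1
  have hGsum : Summable G :=
    ((hwS.mul_right _).add (hm.mul_right _)).add ((hgeo.mul_left _).sub hwS)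
  have hnn : ∀ n, 0 ≤ -(w n * Real.log (w n)) :=
    fun n => ent_term_nonneg (hw.1 n) (isPmf_le_one hw n)
  have hS : Summable (fun n : ℕ => -(w n * Real.log (w n))) :=
    Summable.of_nonneg_of_le hnn hle hGsum
  refine ⟨hS, ?_⟩
  have hbound := Summable.tsum_le_tsum hle hS hGsum
  have hGt : ∑' n, G n = -Real.log (1 - θ) + (∑' n : ℕ, (n : ℝ) * w n) * (-Real.log θ) := by
    rw [hG, Summable.tsum_add ((hwS.mul_right _).add (hm.mul_right _)) ((hgeo.mul_left _).sub hwS),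
        Summable.tsum_add (hwS.mul_right _) (hm.mul_right _),
        Summable.tsum_sub (hgeo.mul_left _) hwS,
        tsum_mul_right, tsum_mul_right, tsum_mul_left,
        tsum_geometric_of_lt_one h0.le h1, hw.2,
        mul_inv_cancel₀ (ne_of_gt hθ1)]
    ring
  rw [hGt] at hbound
  exact hbound

lemma convPmf_spec {w p : ℕ → ℝ} (hw : IsPmf w) (hp : IsPmf p) :
    Summable (convPmf w p) ∧ IsPmf (convPmf w p) := by
  have hwn : Summable fun n => ‖w n‖ := by
    rw [norm_eq_self_of_nonneg hw.1]; exact isPmf_summable hw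
  have hpn : Summable fun n => ‖p n‖ := by
    rw [norm_eq_self_of_nonneg hp.1]; exact isPmf_summable hp
  have hs : Summable (convPmf w p) :=
    (summable_norm_sum_mul_range_of_summable_norm hwn hpn).of_norm
  refine ⟨hs, fun n => Finset.sum_nonneg fun j _ => mul_nonneg (hw.1 j) (hp.1 _), ?_⟩
  have h := tsum_mul_tsum_eq_tsum_sum_range_of_summable_norm hwn hpn
  rw [hw.2, hp.2, one_mul] at h
  exact h.symm

lemma hent_subadd {w p : ℕ → ℝ} (hw : IsPmf w) (hp : IsPmf p)
    (Sw : Summable (fun n => -(w n * Real.log (w n))))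
    (Sp : Summable (fun n => -(p n * Real.log (p n)))) :
    Hent (convPmf w p) ≤
      (∑' n, -(w n * Real.log (w n))) + ∑' n, -(p n * Real.log (p n)) := by
  obtain ⟨hqs, hq⟩ := convPmf_spec hw hp
  set q := convPmf w p with hqdef
  set f1 : ℕ → ℝ := fun j => -(w j * Real.log (w j)) with hf1
  set g2 : ℕ → ℝ := fun k => -(p k * Real.log (p k)) with hg2
  have hf1n : ∀ n, 0 ≤ f1 n := fun n => ent_term_nonneg (hw.1 n) (isPmf_le_one hw n)
  have hg2n : ∀ n, 0 ≤ g2 n := fun n => ent_term_nonneg (hp.1 n) (isPmf_le_one hp n)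
  have hwnorm : Summable fun n => ‖w n‖ := by
    rw [norm_eq_self_of_nonneg hw.1]; exact isPmf_summable hw
  have hpnorm : Summable fun n => ‖p n‖ := by
    rw [norm_eq_self_of_nonneg hp.1]; exact isPmf_summable hp
  have hf1norm : Summable fun n => ‖f1 n‖ := by rw [norm_eq_self_of_nonneg hf1n]; exact Sw
  have hg2norm : Summable fun n => ‖g2 n‖ := by rw [norm_eq_self_of_nonneg hg2n]; exact Sp
  set A : ℕ → ℝ := fun n => ∑ k ∈ Finset.range (n+1), f1 k * p (n - k) with hA
  set B : ℕ → ℝ := fun n => ∑ k ∈ Finset.range (n+1), w k * g2 (n - k) with hB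
  have hAs : Summable A := (summable_norm_sum_mul_range_of_summable_norm hf1norm hpnorm).of_norm
  have hBs : Summable B := (summable_norm_sum_mul_range_of_summable_norm hwnorm hg2norm).of_norm
  have hAt : ∑' n, A n = ∑' n, f1 n := by
    have h := tsum_mul_tsum_eq_tsum_sum_range_of_summable_norm hf1norm hpnorm
    rw [hp.2, mul_one] at h; exact h.symm
  have hBt : ∑' n, B n = ∑' n, g2 n := by
    have h := tsum_mul_tsum_eq_tsum_sum_range_of_summable_norm hwnorm hg2norm
    rw [hw.2, one_mul] at h; exact h.symm
  have hpoint : ∀ n, -(q n * Real.log (q n)) ≤ A n + B n := by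
    intro n
    have hterm : ∀ j ∈ Finset.range (n+1),
        w j * p (n-j) * (-Real.log (q n)) ≤
          -(w j * p (n-j) * Real.log (w j * p (n-j))) := by
      intro j hj
      rcases eq_or_lt_of_le (mul_nonneg (hw.1 j) (hp.1 (n-j))) with h | h
      · rw [← h]; simp
      · have hle : w j * p (n-j) ≤ q n :=
          Finset.single_le_sum (f := fun i => w i * p (n - i))
            (fun i _ => mul_nonneg (hw.1 i) (hp.1 _)) hj
        have hlog : Real.log (w j * p (n-j)) ≤ Real.log (q n) := Real.log_le_log h hle
        nlinarith [hlog, h]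
    have hsum := Finset.sum_le_sum hterm
    have hfac : -(q n * Real.log (q n)) =
        ∑ j ∈ Finset.range (n+1), w j * p (n-j) * (-Real.log (q n)) := by
      have hqn : (∑ j ∈ Finset.range (n+1), w j * p (n - j)) = q n := rfl
      rw [← Finset.sum_mul, hqn]; ring
    calc -(q n * Real.log (q n))
        = ∑ j ∈ Finset.range (n+1), w j * p (n-j) * (-Real.log (q n)) := hfac
      _ ≤ ∑ j ∈ Finset.range (n+1), -(w j * p (n-j) * Real.log (w j * p (n-j))) := hsum
      _ = ∑ j ∈ Finset.range (n+1), (f1 j * p (n-j) + w j * g2 (n-j)) :=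
          Finset.sum_congr rfl fun j _ => mul_log_split (hw.1 j) (hp.1 (n-j))
      _ = A n + B n := by rw [Finset.sum_add_distrib]
  have hLnn : ∀ n, 0 ≤ -(q n * Real.log (q n)) :=
    fun n => ent_term_nonneg (hq.1 n) (isPmf_le_one hq n)
  have hABs : Summable fun n => A n + B n := hAs.add hBs
  have hLs : Summable fun n => -(q n * Real.log (q n)) :=
    Summable.of_nonneg_of_le hLnn hpoint hABs
  have hfin := Summable.tsum_le_tsum hpoint hLs hABs
  rw [Summable.tsum_add hAs hBs, hAt, hBt] at hfin
  exact hfin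

end Aux

/-- for a pmf `p` on ℕ with finite mean, the maximum output entropy
`F c = sup { H(w ⋆ p) : w a pmf on ℕ with mean ≤ c }` tends to `H(p)` as `c → 0⁺`. -/
theorem fullFB_entropy_tendsto_Hp (p : ℕ → ℝ) (hp : IsPmf p)
    (hmean : Summable (fun n : ℕ => (n : ℝ) * p n))
    (F : ℝ → ℝ) (hF : ∀ c : ℝ, F c = sSup (fullFB p c)) :
    Filter.Tendsto F (nhdsWithin 0 (Set.Ioi (0 : ℝ))) (nhds (Hent p)) := by
  classical
  have Sp : Summable (fun n : ℕ => -(p n * Real.log (p n))) :=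
    (entBound hp (θ := 1/2) (by norm_num) (by norm_num) hmean).1
  have hmem : ∀ c : ℝ, 0 < c → Hent p ∈ fullFB p c := by
    intro c hc
    refine ⟨fun n => if n = 0 then (1:ℝ) else 0, ⟨fun n => ?_, ?_⟩, ?_, ?_⟩
    · dsimp only; split <;> norm_num
    · simp
    · have hz : (fun n : ℕ => (n:ℝ) * (if n = 0 then (1:ℝ) else 0)) = fun _ => 0 := by
        funext n; by_cases h : n = 0 <;> simp [h]
      exact ⟨by rw [hz]; exact summable_zero, by rw [hz, tsum_zero]; exact hc.le⟩
    · have hcv : convPmf (fun n => if n = 0 then (1:ℝ) else 0) p = p := by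
        funext n
        simp only [convPmf, ite_mul, one_mul, zero_mul]
        rw [Finset.sum_ite_eq' (Finset.range (n+1)) 0 (fun j => p (n - j))]
        simp
      rw [hcv]
  have hub : ∀ c : ℝ, 0 < c → c < 1 → ∀ h ∈ fullFB p c, h ≤ Hent p + (-Real.log (1 - c) + c * (-Real.log c)) := by
    rintro c hc hc1 h ⟨x, hx, hmx, rfl⟩
    have hb := entBound hx hc hc1 hmx.1
    have hlogc : 0 ≤ -Real.log c := by
      have := Real.log_nonpos hc.le hc1.le; linarith
    have h2 : (∑' n : ℕ, (n:ℝ) * x n) * (-Real.log c) ≤ c * (-Real.log c) :=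
      mul_le_mul_of_nonneg_right hmx.2 hlogc
    have hsub := hent_subadd hx hp hb.1 Sp
    have hHp : Hent p = ∑' n, -(p n * Real.log (p n)) := rfl
    rw [hHp]
    linarith [hb.2, hsub, h2]
  have hbdd : ∀ c : ℝ, 0 < c → c < 1 → BddAbove (fullFB p c) :=
    fun c hc hc1 => ⟨Hent p + (-Real.log (1 - c) + c * (-Real.log c)), fun y hy => hub c hc hc1 y hy⟩
  have hFl : ∀ c : ℝ, 0 < c → c < 1 → Hent p ≤ F c := by
    intro c hc hc1
    rw [hF c]
    exact le_csSup (hbdd c hc hc1) (hmem c hc)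
  have hFu : ∀ c : ℝ, 0 < c → c < 1 → F c ≤ Hent p + (-Real.log (1 - c) + c * (-Real.log c)) := by
    intro c hc hc1
    rw [hF c]
    exact csSup_le ⟨Hent p, hmem c hc⟩ (hub c hc hc1)
  have hgt : Filter.Tendsto (fun c : ℝ => Hent p + (-Real.log (1 - c) + c * (-Real.log c)))
      (nhdsWithin 0 (Set.Ioi (0:ℝ))) (nhds (Hent p)) := by
    have h1 : Filter.Tendsto (fun c : ℝ => -Real.log (1 - c)) (nhds (0:ℝ)) (nhds 0) := by
      have hca : ContinuousAt (fun c : ℝ => -Real.log (1 - c)) 0 := by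
        apply ContinuousAt.neg
        exact (Real.continuousAt_log (by norm_num)).comp
          ((continuous_const.sub continuous_id).continuousAt)
      have := hca.tendsto
      simpa using this
    have h2 : Filter.Tendsto (fun c : ℝ => c * (-Real.log c))
        (nhdsWithin 0 (Set.Ioi (0:ℝ))) (nhds 0) := by
      have h3 := (tendsto_log_mul_rpow_nhdsGT_zero (r := 1) one_pos).neg
      simp_rw [Real.rpow_one, neg_zero] at h3
      exact h3.congr (fun x => by ring)
    have h4 := ((h1.mono_left nhdsWithin_le_nhds).add h2).const_add (Hent p)
    rw [add_zero, add_zero] at h4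
    exact h4
  have hIoo : Set.Ioo (0:ℝ) 1 ∈ nhdsWithin 0 (Set.Ioi (0:ℝ)) :=
    Ioo_mem_nhdsGT_of_mem ⟨le_refl 0, one_pos⟩
  refine tendsto_of_tendsto_of_tendsto_of_le_of_le' tendsto_const_nhds hgt ?_ ?_
  · filter_upwards [hIoo] with c hc
    exact hFl c hc.1 hc.2
  · filter_upwards [hIoo] with c hc
    exact hFu c hc.1 hc.2
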